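/- arXiv:2302.11505 — 3 statements merged into one kernel-verified Lean document; each statement's English description precedes it below -/
import Mathlib

section
/- The short-regression coefficient decomposes, without any independence assumptions, as Δ_short = Δ_dce^s + Δ_ind^s + Δ_sel^s, where Δ_dce^s = Σ_{a∈𝒜} π_1(a)·E[Y(1,a)−Y(0,a) | D=1, A=a], Δ_ind^s = Σ_{a∈𝒜} (π_1(a)−π_0(a))·(E[Y(0,a) | D=0, A=a] − E[Y(0,0) | D=0, A=0]), and Δ_sel^s = Σ_{a∈𝒜} π_1(a)·(E[Y(0,a) | D=1, A=a] − E[Y(0,a) | D=0, A=a]). -/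
open MeasureTheory ProbabilityTheory BigOperators

noncomputable section

variable {Ω : Type} [MeasurableSpace Ω] {K : ℕ}

/-- Expectation of a real-valued random variable. -/
def Exp (P : Measure Ω) (Z : Ω → ℝ) : ℝ := ∫ ω, Z ω ∂P

/-- Probability of an event, as a real number. -/
def Pr (P : Measure Ω) (s : Set Ω) : ℝ := (P s).toReal

/-- Conditional expectation given an event, defined as a ratio. -/
def CE (P : Measure Ω) (Z : Ω → ℝ) (s : Set Ω) : ℝ :=
  Exp P (fun ω => Z ω * s.indicator (fun _ => (1:ℝ)) ω) / Pr P s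

/-- Covariance of two real-valued random variables. -/
def Cov (P : Measure Ω) (Z W : Ω → ℝ) : ℝ :=
  Exp P (fun ω => Z ω * W ω) - Exp P Z * Exp P W

/-- The event {D = d, A = a}. -/
def evDA (D : Ω → ℕ) (A : Ω → Fin K → ℕ) (d : ℕ) (a : Fin K → ℕ) : Set Ω :=
  {ω | D ω = d ∧ A ω = a}

/-- The event {D = d}. -/
def evD (D : Ω → ℕ) (d : ℕ) : Set Ω := {ω | D ω = d}

/-- The event {A = a}. -/
def evA (A : Ω → Fin K → ℕ) (a : Fin K → ℕ) : Set Ω := {ω | A ω = a}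

/-- π_d(a) = P(A = a | D = d). -/
def piP (P : Measure Ω) (D : Ω → ℕ) (A : Ω → Fin K → ℕ) (d : ℕ) (a : Fin K → ℕ) : ℝ :=
  Pr P (evDA D A d a) / Pr P (evD D d)

/-- The observed outcome Y = Σ_{(d,a)} Y(d,a)·1{D=d, A=a}. -/
def Yobs (D : Ω → ℕ) (A : Ω → Fin K → ℕ) (𝒜 : Finset (Fin K → ℕ))
    (Ypot : ℕ → (Fin K → ℕ) → Ω → ℝ) : Ω → ℝ :=
  fun ω => ∑ d ∈ ({0, 1} : Finset ℕ), ∑ a ∈ 𝒜,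
    Ypot d a ω * (if D ω = d ∧ A ω = a then (1:ℝ) else 0)

/-- μ(d,a) = E[Y(d,a)]. -/
def muP (P : Measure Ω) (Ypot : ℕ → (Fin K → ℕ) → Ω → ℝ) (d : ℕ) (a : Fin K → ℕ) : ℝ :=
  Exp P (Ypot d a)

/-- The random vector (D, A) as a real-valued family indexed by Unit ⊕ Fin K. -/
def DAvec (D : Ω → ℕ) (A : Ω → Fin K → ℕ) : Unit ⊕ Fin K → Ω → ℝ :=
  Sum.elim (fun _ ω => (D ω : ℝ)) (fun j ω => (A ω j : ℝ))

/-- The (K+1)×(K+1) covariance matrix of (D, A). -/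
def covDAmat (P : Measure Ω) (D : Ω → ℕ) (A : Ω → Fin K → ℕ) :
    Matrix (Unit ⊕ Fin K) (Unit ⊕ Fin K) ℝ :=
  Matrix.of fun i j => Cov P (DAvec D A i) (DAvec D A j)

/-- The K×K covariance matrix Var(A). -/
def varAmat (P : Measure Ω) (A : Ω → Fin K → ℕ) : Matrix (Fin K) (Fin K) ℝ :=
  Matrix.of fun i j => Cov P (fun ω => (A ω i : ℝ)) (fun ω => (A ω j : ℝ))

/-- The row vector Cov(D, A). -/
def covDA (P : Measure Ω) (D : Ω → ℕ) (A : Ω → Fin K → ℕ) : Fin K → ℝ :=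
  fun j => Cov P (fun ω => (D ω : ℝ)) (fun ω => (A ω j : ℝ))

/-- M = Cov(D,A) ⬝ Var(A)⁻¹. -/
def Mlong (P : Measure Ω) (D : Ω → ℕ) (A : Ω → Fin K → ℕ) : Fin K → ℝ :=
  fun j => ∑ i, covDA P D A i * (varAmat P A)⁻¹ i j

/-- Var(D). -/
def varD (P : Measure Ω) (D : Ω → ℕ) : ℝ :=
  Cov P (fun ω => (D ω : ℝ)) (fun ω => (D ω : ℝ))

/-- denom = Var(D) − Cov(D,A)·Var(A)⁻¹·Cov(A,D). -/
def denomL (P : Measure Ω) (D : Ω → ℕ) (A : Ω → Fin K → ℕ) : ℝ :=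
  varD P D - ∑ j, Mlong P D A j * covDA P D A j

/-- The long-regression weight ω_dce^l(a). -/
def wdceL (P : Measure Ω) (D : Ω → ℕ) (A : Ω → Fin K → ℕ) (a : Fin K → ℕ) : ℝ :=
  piP P D A 1 a *
    (varD P D - Pr P (evD D 1) *
      ∑ j, Mlong P D A j * ((a j : ℝ) - Exp P (fun ω => (A ω j : ℝ)))) / denomL P D A

/-- The long-regression weight ω_ind^l(a). -/
def windL (P : Measure Ω) (D : Ω → ℕ) (A : Ω → Fin K → ℕ) (a : Fin K → ℕ) : ℝ :=
  (varD P D * (piP P D A 1 a - piP P D A 0 a) -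
    Pr P (evA A a) * ∑ j, Mlong P D A j * ((a j : ℝ) - Exp P (fun ω => (A ω j : ℝ))))
  / denomL P D A

/-- The residual of the long regression of Y on (1, D, A). -/
def residLong (D : Ω → ℕ) (A : Ω → Fin K → ℕ) (𝒜 : Finset (Fin K → ℕ))
    (Ypot : ℕ → (Fin K → ℕ) → Ω → ℝ) (Δ θ₀ : ℝ) (θ : Fin K → ℝ) : Ω → ℝ :=
  fun ω => Yobs D A 𝒜 Ypot ω - Δ * (D ω : ℝ) - θ₀ - ∑ j, θ j * (A ω j : ℝ)

/-- The random vector W = (A, A·D) as a real-valued family indexed by Fin K ⊕ Fin K. -/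
def Wvec (D : Ω → ℕ) (A : Ω → Fin K → ℕ) : Fin K ⊕ Fin K → Ω → ℝ :=
  Sum.elim (fun j ω => (A ω j : ℝ)) (fun j ω => (A ω j : ℝ) * (D ω : ℝ))

/-- The 2K×2K covariance matrix Var(W), W = (A, AD). -/
def varWmat (P : Measure Ω) (D : Ω → ℕ) (A : Ω → Fin K → ℕ) :
    Matrix (Fin K ⊕ Fin K) (Fin K ⊕ Fin K) ℝ :=
  Matrix.of fun u v => Cov P (Wvec D A u) (Wvec D A v)

/-- The row vector Cov(D, W). -/
def covDW (P : Measure Ω) (D : Ω → ℕ) (A : Ω → Fin K → ℕ) : Fin K ⊕ Fin K → ℝ :=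
  fun u => Cov P (fun ω => (D ω : ℝ)) (Wvec D A u)

/-- M = Cov(D,W) ⬝ Var(W)⁻¹ for the interaction regression. -/
def Minter (P : Measure Ω) (D : Ω → ℕ) (A : Ω → Fin K → ℕ) : Fin K ⊕ Fin K → ℝ :=
  fun v => ∑ u, covDW P D A u * (varWmat P D A)⁻¹ u v

/-- denom = Var(D) − M·Cov(W,D) for the interaction regression. -/
def denomI (P : Measure Ω) (D : Ω → ℕ) (A : Ω → Fin K → ℕ) : ℝ :=
  varD P D - ∑ v, Minter P D A v * covDW P D A v

/-- E[A_j | D = 1]. -/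
def condA1 (P : Measure Ω) (D : Ω → ℕ) (A : Ω → Fin K → ℕ) (j : Fin K) : ℝ :=
  CE P (fun ω => (A ω j : ℝ)) (evD D 1)

/-- The random vector (D, A, AD) as a real-valued family. -/
def DADvec (D : Ω → ℕ) (A : Ω → Fin K → ℕ) : Unit ⊕ (Fin K ⊕ Fin K) → Ω → ℝ :=
  Sum.elim (fun _ ω => (D ω : ℝ)) (Wvec D A)

/-- The (2K+1)×(2K+1) covariance matrix of (D, A, AD). -/
def covDADmat (P : Measure Ω) (D : Ω → ℕ) (A : Ω → Fin K → ℕ) :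
    Matrix (Unit ⊕ (Fin K ⊕ Fin K)) (Unit ⊕ (Fin K ⊕ Fin K)) ℝ :=
  Matrix.of fun i j => Cov P (DADvec D A i) (DADvec D A j)

/-- The interaction-regression weight ω_dce^i(a). -/
def wdceI (P : Measure Ω) (D : Ω → ℕ) (A : Ω → Fin K → ℕ) (a : Fin K → ℕ) : ℝ :=
  piP P D A 1 a *
    (varD P D
      - Pr P (evD D 1) *
          ∑ j, Minter P D A (Sum.inl j) * ((a j : ℝ) - Exp P (fun ω => (A ω j : ℝ)))
      - Pr P (evD D 1) *
          ∑ j, Minter P D A (Sum.inr j) * ((a j : ℝ) - Pr P (evD D 1) * condA1 P D A j))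
  / denomI P D A

/-- The interaction-regression weight ω_ind^i(a). -/
def windI (P : Measure Ω) (D : Ω → ℕ) (A : Ω → Fin K → ℕ) (a : Fin K → ℕ) : ℝ :=
  (varD P D * (piP P D A 1 a - piP P D A 0 a)
    - ∑ j, Minter P D A (Sum.inl j) * Pr P (evA A a) * ((a j : ℝ) - Exp P (fun ω => (A ω j : ℝ)))
    - Pr P (evD D 1) *
        ∑ j, Minter P D A (Sum.inr j) *
          (piP P D A 1 a * (a j : ℝ) - Pr P (evA A a) * condA1 P D A j))
  / denomI P D A

/-- The residual of the interaction regression of Y on (1, D, A, AD). -/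
def residInter (D : Ω → ℕ) (A : Ω → Fin K → ℕ) (𝒜 : Finset (Fin K → ℕ))
    (Ypot : ℕ → (Fin K → ℕ) → Ω → ℝ) (Δ θ₀ : ℝ) (θ lam : Fin K → ℝ) : Ω → ℝ :=
  fun ω => Yobs D A 𝒜 Ypot ω - Δ * (D ω : ℝ) - θ₀ - (∑ j, θ j * (A ω j : ℝ))
    - ∑ j, lam j * (A ω j : ℝ) * (D ω : ℝ)

/-- P(D = d | A = a). -/
def condDgivenA (P : Measure Ω) (D : Ω → ℕ) (A : Ω → Fin K → ℕ) (d : ℕ) (a : Fin K → ℕ) : ℝ :=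
  Pr P (evDA D A d a) / Pr P (evA A a)

/-- The SFE weight ω_sfe(a). -/
def wsfe (P : Measure Ω) (D : Ω → ℕ) (A : Ω → Fin K → ℕ) (𝒜 : Finset (Fin K → ℕ))
    (a : Fin K → ℕ) : ℝ :=
  condDgivenA P D A 1 a * condDgivenA P D A 0 a * Pr P (evA A a) /
    ∑ a' ∈ 𝒜, condDgivenA P D A 1 a' * condDgivenA P D A 0 a' * Pr P (evA A a')

/-- The residual of the SFE regression of Y on (D, {1{A=a}}). -/
def residSFE (D : Ω → ℕ) (A : Ω → Fin K → ℕ) (𝒜 : Finset (Fin K → ℕ))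
    (Ypot : ℕ → (Fin K → ℕ) → Ω → ℝ) (Δ : ℝ) (θ : (Fin K → ℕ) → ℝ) : Ω → ℝ :=
  fun ω => Yobs D A 𝒜 Ypot ω - Δ * (D ω : ℝ) -
    ∑ a ∈ 𝒜, θ a * (if A ω = a then (1:ℝ) else 0)

/-- The residual of the saturated regression of Y on ({1{A=a}}, {D·1{A=a}}). -/
def residSAT (D : Ω → ℕ) (A : Ω → Fin K → ℕ) (𝒜 : Finset (Fin K → ℕ))
    (Ypot : ℕ → (Fin K → ℕ) → Ω → ℝ) (γ Δsat : (Fin K → ℕ) → ℝ) : Ω → ℝ :=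
  fun ω => Yobs D A 𝒜 Ypot ω - (∑ a ∈ 𝒜, γ a * (if A ω = a then (1:ℝ) else 0)) -
    ∑ a ∈ 𝒜, Δsat a * (D ω : ℝ) * (if A ω = a then (1:ℝ) else 0)

lemma aux_mul_indicator (Z : Ω → ℝ) (s : Set Ω) :
    (fun ω => Z ω * s.indicator (fun _ => (1:ℝ)) ω) = s.indicator Z := by
  ext ω; by_cases h : ω ∈ s <;> simp [h]

lemma aux_yobs_eq (D : Ω → ℕ) (A : Ω → Fin K → ℕ) (𝒜 : Finset (Fin K → ℕ))
    (Ypot : ℕ → (Fin K → ℕ) → Ω → ℝ)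
    (hDbin : ∀ ω, D ω = 0 ∨ D ω = 1) (hAsupp : ∀ ω, A ω ∈ 𝒜) (ω : Ω) :
    Yobs D A 𝒜 Ypot ω = Ypot (D ω) (A ω) ω := by
  unfold Yobs
  rw [Finset.sum_eq_single (D ω)]
  · rw [Finset.sum_eq_single (A ω)]
    · simp
    · intro b _ hne
      simp [(Ne.symm hne : A ω ≠ b)]
    · intro h; exact absurd (hAsupp ω) h
  · intro d _ hne
    apply Finset.sum_eq_zero
    intro a _
    simp [(Ne.symm hne : D ω ≠ d)]
  · intro h
    rcases hDbin ω with h0 | h1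
    · simp [h0] at h
    · simp [h1] at h

/-- The short-regression coefficient decomposes, without any independence assumptions, as
Δ_short = Δ_dce^s + Δ_ind^s + Δ_sel^s. -/
theorem short_regression_decomposition
    (P : Measure Ω) [IsProbabilityMeasure P]
    (D : Ω → ℕ) (A : Ω → Fin K → ℕ) (𝒜 : Finset (Fin K → ℕ))
    (Ypot : ℕ → (Fin K → ℕ) → Ω → ℝ)
    (hD : Measurable D) (hA : Measurable A)
    (hDbin : ∀ ω, D ω = 0 ∨ D ω = 1)
    (hAsupp : ∀ ω, A ω ∈ 𝒜) (h𝒜0 : (0 : Fin K → ℕ) ∈ 𝒜)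
    (hInt : ∀ d ∈ ({0, 1} : Finset ℕ), ∀ a ∈ 𝒜, Integrable (Ypot d a) P)
    (hpos : ∀ d ∈ ({0, 1} : Finset ℕ), ∀ a ∈ 𝒜, 0 < Pr P (evDA D A d a))
    :
    CE P (Yobs D A 𝒜 Ypot) (evD D 1) - CE P (Yobs D A 𝒜 Ypot) (evD D 0)
      = (∑ a ∈ 𝒜, piP P D A 1 a *
            CE P (fun ω => Ypot 1 a ω - Ypot 0 a ω) (evDA D A 1 a))
        + (∑ a ∈ 𝒜, (piP P D A 1 a - piP P D A 0 a) *
            (CE P (Ypot 0 a) (evDA D A 0 a) - CE P (Ypot 0 0) (evDA D A 0 0)))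
        + (∑ a ∈ 𝒜, piP P D A 1 a *
            (CE P (Ypot 0 a) (evDA D A 1 a) - CE P (Ypot 0 a) (evDA D A 0 a))) := by
  classical
  have h0mem : (0:ℕ) ∈ ({0,1} : Finset ℕ) := by simp
  have h1mem : (1:ℕ) ∈ ({0,1} : Finset ℕ) := by simp
  -- measurability of events
  have hsDA : ∀ d a, MeasurableSet (evDA D A d a) := by
    intro d a
    have : evDA D A d a = D ⁻¹' {d} ∩ A ⁻¹' {a} := by
      ext ω; simp [evDA, Set.mem_setOf_eq]
    rw [this]
    exact (hD (measurableSet_singleton d)).inter (hA (measurableSet_singleton a))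
  -- integrability of indicated potential outcomes
  have hIint : ∀ d ∈ ({0,1} : Finset ℕ), ∀ a ∈ 𝒜, ∀ s : Set Ω, MeasurableSet s →
      Integrable ((s.indicator (Ypot d a))) P := fun d hd a ha s hs =>
    (hInt d hd a ha).indicator hs
  -- partition of the event {D = d}
  have hunion : ∀ d, evD D d = ⋃ a ∈ 𝒜, evDA D A d a := by
    intro d
    ext ω
    simp only [evD, evDA, Set.mem_setOf_eq, Set.mem_iUnion]
    constructor
    · intro h; exact ⟨A ω, hAsupp ω, h, rfl⟩
    · rintro ⟨a, _, h, _⟩; exact h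
  have hPr : ∀ d, Pr P (evD D d) = ∑ a ∈ 𝒜, Pr P (evDA D A d a) := by
    intro d
    unfold Pr
    rw [hunion d, measure_biUnion_finset ?_ (fun a _ => hsDA d a),
      ENNReal.toReal_sum (fun a _ => measure_ne_top P _)]
    intro a _ b _ hab
    simp only [Function.onFun]
    rw [Set.disjoint_left]
    rintro ω ⟨_, h1⟩ ⟨_, h2⟩
    exact hab (h1 ▸ h2 ▸ rfl)
  have hPrDApos : ∀ d ∈ ({0,1} : Finset ℕ), ∀ a ∈ 𝒜, Pr P (evDA D A d a) ≠ 0 :=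
    fun d hd a ha => ne_of_gt (hpos d hd a ha)
  have hPrDpos : ∀ d ∈ ({0,1} : Finset ℕ), Pr P (evD D d) ≠ 0 := by
    intro d hd
    have : 0 < Pr P (evD D d) := by
      rw [hPr d]
      exact Finset.sum_pos' (fun a ha => le_of_lt (hpos d hd a ha)) ⟨0, h𝒜0, hpos d hd 0 h𝒜0⟩
    exact ne_of_gt this
  -- sum of pi's is 1
  have hpisum : ∀ d ∈ ({0,1} : Finset ℕ), ∑ a ∈ 𝒜, piP P D A d a = 1 := by
    intro d hd
    unfold piP
    rw [← Finset.sum_div, ← hPr d, div_self (hPrDpos d hd)]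
  -- pointwise identity for Yobs on {D = d}
  have hpt : ∀ d, ∀ ω : Ω, (evD D d).indicator (Yobs D A 𝒜 Ypot) ω
      = ∑ a ∈ 𝒜, (evDA D A d a).indicator (Ypot d a) ω := by
    intro d ω
    by_cases hDω : D ω = d
    · have hmemD : ω ∈ evD D d := hDω
      rw [Set.indicator_of_mem hmemD, Finset.sum_eq_single (A ω)]
      · have hmemDA : ω ∈ evDA D A d (A ω) := ⟨hDω, rfl⟩
        rw [Set.indicator_of_mem hmemDA, aux_yobs_eq D A 𝒜 Ypot hDbin hAsupp ω, hDω]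
      · intro b _ hne
        apply Set.indicator_of_notMem
        rintro ⟨_, h2⟩; exact hne (h2 ▸ rfl)
      · intro h; exact absurd (hAsupp ω) h
    · rw [Set.indicator_of_notMem (show ω ∉ evD D d from hDω)]
      refine (Finset.sum_eq_zero fun a _ => ?_).symm
      exact Set.indicator_of_notMem (show ω ∉ evDA D A d a from fun h => hDω h.1) _
  -- CE of Yobs over {D = d} decomposes
  have key : ∀ d ∈ ({0,1} : Finset ℕ),
      CE P (Yobs D A 𝒜 Ypot) (evD D d)
        = ∑ a ∈ 𝒜, piP P D A d a * CE P (Ypot d a) (evDA D A d a) := by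
    intro d hd
    have hnum : Exp P (fun ω => Yobs D A 𝒜 Ypot ω * (evD D d).indicator (fun _ => (1:ℝ)) ω)
        = ∑ a ∈ 𝒜, Exp P (fun ω => Ypot d a ω * (evDA D A d a).indicator (fun _ => (1:ℝ)) ω) := by
      unfold Exp
      rw [show (fun ω => Yobs D A 𝒜 Ypot ω * (evD D d).indicator (fun _ => (1:ℝ)) ω)
          = fun ω => ∑ a ∈ 𝒜, (evDA D A d a).indicator (Ypot d a) ω by
        rw [aux_mul_indicator]; exact funext (hpt d)]
      rw [integral_finset_sum _ (fun a ha => hIint d hd a ha _ (hsDA d a))]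
      exact Finset.sum_congr rfl fun a _ => by rw [aux_mul_indicator]
    unfold CE piP
    rw [hnum, Finset.sum_div]
    refine Finset.sum_congr rfl fun a ha => ?_
    have h1 := hPrDApos d hd a ha
    have h2 := hPrDpos d hd
    field_simp
  -- CE of a difference over a fixed event splits
  have hCEsub : ∀ a ∈ 𝒜,
      CE P (fun ω => Ypot 1 a ω - Ypot 0 a ω) (evDA D A 1 a)
        = CE P (Ypot 1 a) (evDA D A 1 a) - CE P (Ypot 0 a) (evDA D A 1 a) := by
    intro a ha
    unfold CE Exp
    rw [← sub_div]
    congr 1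
    rw [show (fun ω => (Ypot 1 a ω - Ypot 0 a ω) * (evDA D A 1 a).indicator (fun _ => (1:ℝ)) ω)
        = fun ω => (evDA D A 1 a).indicator (Ypot 1 a) ω - (evDA D A 1 a).indicator (Ypot 0 a) ω by
      ext ω; by_cases h : ω ∈ evDA D A 1 a <;> simp [h]]
    rw [integral_sub (hIint 1 h1mem a ha _ (hsDA 1 a)) (hIint 0 h0mem a ha _ (hsDA 1 a))]
    rw [aux_mul_indicator, aux_mul_indicator]
  -- put everything together
  rw [key 1 h1mem, key 0 h0mem]
  have hR : (∑ a ∈ 𝒜, piP P D A 1 a *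
        CE P (fun ω => Ypot 1 a ω - Ypot 0 a ω) (evDA D A 1 a))
      = ∑ a ∈ 𝒜, piP P D A 1 a *
        (CE P (Ypot 1 a) (evDA D A 1 a) - CE P (Ypot 0 a) (evDA D A 1 a)) :=
    Finset.sum_congr rfl fun a ha => by rw [hCEsub a ha]
  rw [hR, ← Finset.sum_add_distrib, ← Finset.sum_add_distrib]
  have hterm : ∀ a ∈ 𝒜,
      piP P D A 1 a * (CE P (Ypot 1 a) (evDA D A 1 a) - CE P (Ypot 0 a) (evDA D A 1 a))
        + (piP P D A 1 a - piP P D A 0 a) *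
            (CE P (Ypot 0 a) (evDA D A 0 a) - CE P (Ypot 0 0) (evDA D A 0 0))
        + piP P D A 1 a * (CE P (Ypot 0 a) (evDA D A 1 a) - CE P (Ypot 0 a) (evDA D A 0 a))
      = (piP P D A 1 a * CE P (Ypot 1 a) (evDA D A 1 a)
          - piP P D A 0 a * CE P (Ypot 0 a) (evDA D A 0 a))
        + CE P (Ypot 0 0) (evDA D A 0 0) * (piP P D A 0 a - piP P D A 1 a) := by
    intro a _; ring
  rw [Finset.sum_congr rfl hterm, Finset.sum_add_distrib, Finset.sum_sub_distrib,
    ← Finset.mul_sum, Finset.sum_sub_distrib, hpisum 1 h1mem, hpisum 0 h0mem]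
  ring
end
end

section
/- Under Assumption 2 (strong exogeneity), the three terms of the short-regression decomposition simplify to Δ_sel^s = 0, Δ_dce^s = Σ_{a∈𝒜} π_1(a)·(μ(1,a)−μ(0,a)), and Δ_ind^s = Σ_{a∈𝒜} (π_1(a)−π_0(a))·(μ(0,a)−μ(0,0)); consequently Δ_short = Σ_{a∈𝒜} π_1(a)·(μ(1,a)−μ(0,a)) + Σ_{a∈𝒜} (π_1(a)−π_0(a))·(μ(0,a)−μ(0,0)). -/
open MeasureTheory ProbabilityTheory BigOperators

noncomputable section

variable {Ω : Type} [MeasurableSpace Ω] {K : ℕ}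

section AuxShortReg

lemma evDA_meas' (D : Ω → ℕ) (A : Ω → Fin K → ℕ) (hD : Measurable D) (hA : Measurable A)
    (d : ℕ) (a : Fin K → ℕ) : MeasurableSet (evDA D A d a) := by
  have : evDA D A d a = D ⁻¹' {d} ∩ A ⁻¹' {a} := by ext ω; simp [evDA]
  rw [this]
  exact (hD (measurableSet_singleton d)).inter (hA (measurableSet_singleton a))

lemma mul_ind_eq' (f : Ω → ℝ) (s : Set Ω) :
    (fun ω => f ω * s.indicator (fun _ => (1:ℝ)) ω) = s.indicator f := by
  funext ω; by_cases h : ω ∈ s <;> simp [h]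

lemma exp_mul_ind_evDA' (P : Measure Ω) [IsProbabilityMeasure P]
    (D : Ω → ℕ) (A : Ω → Fin K → ℕ) (hD : Measurable D) (hA : Measurable A)
    (Z : Ω → ℝ) (hZ : Integrable Z P)
    (hI : IndepFun (fun ω => (D ω, A ω)) Z P) (d : ℕ) (a : Fin K → ℕ) :
    Exp P (fun ω => Z ω * (evDA D A d a).indicator (fun _ => (1:ℝ)) ω)
      = Exp P Z * Pr P (evDA D A d a) := by
  have hmeas := evDA_meas' D A hD hA d a
  have hphi : (evDA D A d a).indicator (fun _ => (1:ℝ))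
      = (fun p : ℕ × (Fin K → ℕ) => if p.1 = d ∧ p.2 = a then (1:ℝ) else 0)
        ∘ (fun ω => (D ω, A ω)) := by
    funext ω; by_cases h : ω ∈ evDA D A d a
    · have h' := h; simp only [evDA, Set.mem_setOf_eq] at h'
      simp [Set.indicator_of_mem h, Function.comp, h'.1, h'.2]
    · have h' := h; simp only [evDA, Set.mem_setOf_eq] at h'
      simp only [Set.indicator_of_notMem h, Function.comp]
      rw [if_neg h']
  have hind : IndepFun Z ((evDA D A d a).indicator (fun _ => (1:ℝ))) P := by
    rw [hphi]
    exact hI.symm.comp measurable_id (measurable_of_countable _)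
  have hmul := hind.integral_mul_eq_mul_integral hZ.1
    ((measurable_const.indicator hmeas).aestronglyMeasurable)
  have heq : Exp P (fun ω => Z ω * (evDA D A d a).indicator (fun _ => (1:ℝ)) ω)
      = integral P (Z * ((evDA D A d a).indicator fun _ => (1:ℝ))) := rfl
  rw [heq, hmul]
  congr 1
  rw [integral_indicator_const _ hmeas]
  simp [Pr, measureReal_def]

lemma pr_mono' (P : Measure Ω) [IsProbabilityMeasure P] {s t : Set Ω} (h : s ⊆ t) :
    Pr P s ≤ Pr P t :=
  ENNReal.toReal_mono (measure_ne_top P t) (measure_mono h)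

lemma pr_evD_eq_sum' (P : Measure Ω) [IsProbabilityMeasure P]
    (D : Ω → ℕ) (A : Ω → Fin K → ℕ) (hD : Measurable D) (hA : Measurable A)
    (𝒜 : Finset (Fin K → ℕ)) (hAsupp : ∀ ω, A ω ∈ 𝒜) (d : ℕ) :
    Pr P (evD D d) = ∑ a ∈ 𝒜, Pr P (evDA D A d a) := by
  have hunion : evD D d = ⋃ a ∈ 𝒜, evDA D A d a := by
    ext ω
    simp only [evD, evDA, Set.mem_setOf_eq, Set.mem_iUnion]
    constructor
    · intro h; exact ⟨A ω, hAsupp ω, h, rfl⟩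
    · rintro ⟨a, _, h, _⟩; exact h
  have hdisj : (↑𝒜 : Set (Fin K → ℕ)).PairwiseDisjoint (fun a => evDA D A d a) := by
    intro a _ b _ hab
    refine Set.disjoint_left.mpr ?_
    rintro ω ⟨_, h1⟩ ⟨_, h2⟩
    exact hab (h1 ▸ h2 ▸ rfl)
  rw [Pr, hunion, measure_biUnion_finset hdisj (fun a _ => evDA_meas' D A hD hA d a),
    ENNReal.toReal_sum (fun a _ => measure_ne_top P _)]
  rfl

lemma yobs_mul_ind' (D : Ω → ℕ) (A : Ω → Fin K → ℕ) (𝒜 : Finset (Fin K → ℕ))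
    (Ypot : ℕ → (Fin K → ℕ) → Ω → ℝ) (d : ℕ) (hd : d = 0 ∨ d = 1) :
    (fun ω => Yobs D A 𝒜 Ypot ω * (evD D d).indicator (fun _ => (1:ℝ)) ω)
      = fun ω => ∑ a ∈ 𝒜, Ypot d a ω * (evDA D A d a).indicator (fun _ => (1:ℝ)) ω := by
  funext ω
  by_cases hω : D ω = d
  · have hmem : ω ∈ evD D d := hω
    rw [Set.indicator_of_mem hmem, mul_one, Yobs]
    rw [show ({0,1} : Finset ℕ) = insert 0 {1} from rfl,
      Finset.sum_insert (by simp), Finset.sum_singleton]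
    have hcongr : ∀ d', D ω = d' →
        ∑ a ∈ 𝒜, Ypot d' a ω * (if D ω = d' ∧ A ω = a then (1:ℝ) else 0)
        = ∑ a ∈ 𝒜, Ypot d' a ω * (evDA D A d' a).indicator (fun _ => (1:ℝ)) ω := by
      intro d' hd'
      apply Finset.sum_congr rfl; intro a _
      congr 1
      by_cases hAa : A ω = a
      · rw [if_pos ⟨hd', hAa⟩, Set.indicator_of_mem (show ω ∈ evDA D A d' a from ⟨hd', hAa⟩)]
      · rw [if_neg (fun h => hAa h.2),
          Set.indicator_of_notMem (show ω ∉ evDA D A d' a from fun h => hAa h.2)]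
    have hzero : ∀ d', D ω ≠ d' →
        ∑ a ∈ 𝒜, Ypot d' a ω * (if D ω = d' ∧ A ω = a then (1:ℝ) else 0) = 0 :=
      fun d' hd' => Finset.sum_eq_zero (fun a _ => by rw [if_neg (fun h => hd' h.1), mul_zero])
    rcases hd with rfl | rfl
    · rw [hzero 1 (by omega), add_zero, hcongr 0 hω]
    · rw [hzero 0 (by omega), zero_add, hcongr 1 hω]
  · have hmem : ω ∉ evD D d := hω
    rw [Set.indicator_of_notMem hmem, mul_zero]
    symm; apply Finset.sum_eq_zero; intro a _
    rw [Set.indicator_of_notMem (show ω ∉ evDA D A d a from fun h => hω h.1), mul_zero]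

lemma exp_yobs' (P : Measure Ω) [IsProbabilityMeasure P]
    (D : Ω → ℕ) (A : Ω → Fin K → ℕ) (hD : Measurable D) (hA : Measurable A)
    (𝒜 : Finset (Fin K → ℕ)) (Ypot : ℕ → (Fin K → ℕ) → Ω → ℝ)
    (hInt : ∀ d ∈ ({0, 1} : Finset ℕ), ∀ a ∈ 𝒜, Integrable (Ypot d a) P)
    (hIndep : ∀ d ∈ ({0, 1} : Finset ℕ), ∀ a ∈ 𝒜,
      IndepFun (fun ω => (D ω, A ω)) (Ypot d a) P)
    (d : ℕ) (hd : d ∈ ({0, 1} : Finset ℕ)) :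
    Exp P (fun ω => Yobs D A 𝒜 Ypot ω * (evD D d).indicator (fun _ => (1:ℝ)) ω)
      = ∑ a ∈ 𝒜, Exp P (Ypot d a) * Pr P (evDA D A d a) := by
  have hd' : d = 0 ∨ d = 1 := by simpa using hd
  rw [Exp]
  rw [show (fun ω => Yobs D A 𝒜 Ypot ω * (evD D d).indicator (fun _ => (1:ℝ)) ω)
      = fun ω => ∑ a ∈ 𝒜, Ypot d a ω * (evDA D A d a).indicator (fun _ => (1:ℝ)) ω
      from yobs_mul_ind' D A 𝒜 Ypot d hd']
  rw [integral_finset_sum 𝒜 (fun a ha => by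
    rw [show (fun ω => Ypot d a ω * (evDA D A d a).indicator (fun _ => (1:ℝ)) ω)
        = (evDA D A d a).indicator (Ypot d a) from mul_ind_eq' _ _]
    exact (hInt d hd a ha).indicator (evDA_meas' D A hD hA d a))]
  exact Finset.sum_congr rfl (fun a ha =>
    exp_mul_ind_evDA' P D A hD hA (Ypot d a) (hInt d hd a ha) (hIndep d hd a ha) d a)

end AuxShortReg

/-- Under strong exogeneity, the three terms of the short-regression decomposition simplify:
the selection term vanishes, and Δ_short = Σ_a π₁(a)(μ(1,a)−μ(0,a)) + Σ_a (π₁(a)−π₀(a))(μ(0,a)−μ(0,0)). -/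
theorem short_regression_under_strong_exogeneity
    (P : Measure Ω) [IsProbabilityMeasure P]
    (D : Ω → ℕ) (A : Ω → Fin K → ℕ) (𝒜 : Finset (Fin K → ℕ))
    (Ypot : ℕ → (Fin K → ℕ) → Ω → ℝ)
    (hD : Measurable D) (hA : Measurable A)
    (hDbin : ∀ ω, D ω = 0 ∨ D ω = 1)
    (hAsupp : ∀ ω, A ω ∈ 𝒜) (h𝒜0 : (0 : Fin K → ℕ) ∈ 𝒜)
    (hInt : ∀ d ∈ ({0, 1} : Finset ℕ), ∀ a ∈ 𝒜, Integrable (Ypot d a) P)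
    (hpos : ∀ d ∈ ({0, 1} : Finset ℕ), ∀ a ∈ 𝒜, 0 < Pr P (evDA D A d a))
    (hIndep : ∀ d ∈ ({0, 1} : Finset ℕ), ∀ a ∈ 𝒜,
      IndepFun (fun ω => (D ω, A ω)) (Ypot d a) P)
    :
    (∑ a ∈ 𝒜, piP P D A 1 a *
        (CE P (Ypot 0 a) (evDA D A 1 a) - CE P (Ypot 0 a) (evDA D A 0 a))) = 0
    ∧ (∑ a ∈ 𝒜, piP P D A 1 a * CE P (fun ω => Ypot 1 a ω - Ypot 0 a ω) (evDA D A 1 a))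
        = ∑ a ∈ 𝒜, piP P D A 1 a * (muP P Ypot 1 a - muP P Ypot 0 a)
    ∧ (∑ a ∈ 𝒜, (piP P D A 1 a - piP P D A 0 a) *
        (CE P (Ypot 0 a) (evDA D A 0 a) - CE P (Ypot 0 0) (evDA D A 0 0)))
        = ∑ a ∈ 𝒜, (piP P D A 1 a - piP P D A 0 a) * (muP P Ypot 0 a - muP P Ypot 0 0)
    ∧ CE P (Yobs D A 𝒜 Ypot) (evD D 1) - CE P (Yobs D A 𝒜 Ypot) (evD D 0)
        = (∑ a ∈ 𝒜, piP P D A 1 a * (muP P Ypot 1 a - muP P Ypot 0 a))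
          + ∑ a ∈ 𝒜, (piP P D A 1 a - piP P D A 0 a) * (muP P Ypot 0 a - muP P Ypot 0 0) := by
  have h0 : (0:ℕ) ∈ ({0,1} : Finset ℕ) := by simp
  have h1 : (1:ℕ) ∈ ({0,1} : Finset ℕ) := by simp
  have hCE : ∀ d' ∈ ({0,1} : Finset ℕ), ∀ d ∈ ({0,1} : Finset ℕ), ∀ a' ∈ 𝒜, ∀ a ∈ 𝒜,
      CE P (Ypot d' a') (evDA D A d a) = muP P Ypot d' a' := by
    intro d' hd' d hd a' ha' a ha
    simp only [CE]
    rw [exp_mul_ind_evDA' P D A hD hA (Ypot d' a') (hInt d' hd' a' ha') (hIndep d' hd' a' ha') d a,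
      mul_div_assoc, div_self (ne_of_gt (hpos d hd a ha)), mul_one]
    rfl
  have hdiffCE : ∀ a ∈ 𝒜, CE P (fun ω => Ypot 1 a ω - Ypot 0 a ω) (evDA D A 1 a)
      = muP P Ypot 1 a - muP P Ypot 0 a := by
    intro a ha
    have hm := evDA_meas' D A hD hA 1 a
    have int1 : Integrable (fun ω => Ypot 1 a ω * (evDA D A 1 a).indicator (fun _ => (1:ℝ)) ω) P := by
      rw [mul_ind_eq']; exact (hInt 1 h1 a ha).indicator hm
    have int0 : Integrable (fun ω => Ypot 0 a ω * (evDA D A 1 a).indicator (fun _ => (1:ℝ)) ω) P := by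
      rw [mul_ind_eq']; exact (hInt 0 h0 a ha).indicator hm
    have e1 : ∫ ω, Ypot 1 a ω * (evDA D A 1 a).indicator (fun _ => (1:ℝ)) ω ∂P
        = Exp P (Ypot 1 a) * Pr P (evDA D A 1 a) :=
      exp_mul_ind_evDA' P D A hD hA (Ypot 1 a) (hInt 1 h1 a ha) (hIndep 1 h1 a ha) 1 a
    have e0 : ∫ ω, Ypot 0 a ω * (evDA D A 1 a).indicator (fun _ => (1:ℝ)) ω ∂P
        = Exp P (Ypot 0 a) * Pr P (evDA D A 1 a) :=
      exp_mul_ind_evDA' P D A hD hA (Ypot 0 a) (hInt 0 h0 a ha) (hIndep 0 h0 a ha) 1 a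
    have hnum : Exp P (fun ω => (Ypot 1 a ω - Ypot 0 a ω) * (evDA D A 1 a).indicator (fun _ => (1:ℝ)) ω)
        = (muP P Ypot 1 a - muP P Ypot 0 a) * Pr P (evDA D A 1 a) := by
      have heq : (fun ω => (Ypot 1 a ω - Ypot 0 a ω) * (evDA D A 1 a).indicator (fun _ => (1:ℝ)) ω)
          = fun ω => (Ypot 1 a ω * (evDA D A 1 a).indicator (fun _ => (1:ℝ)) ω)
            - (Ypot 0 a ω * (evDA D A 1 a).indicator (fun _ => (1:ℝ)) ω) := by
        funext ω; ring
      rw [Exp, heq, integral_sub int1 int0, e1, e0]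
      simp only [muP]; ring
    simp only [CE]
    rw [hnum, mul_div_assoc, div_self (ne_of_gt (hpos 1 h1 a ha)), mul_one]
  have hPrD : ∀ d ∈ ({0,1} : Finset ℕ), 0 < Pr P (evD D d) := fun d hd =>
    lt_of_lt_of_le (hpos d hd 0 h𝒜0) (pr_mono' P (fun ω h => h.1))
  have hCEY : ∀ d ∈ ({0,1} : Finset ℕ), CE P (Yobs D A 𝒜 Ypot) (evD D d)
      = ∑ a ∈ 𝒜, muP P Ypot d a * piP P D A d a := by
    intro d hd
    simp only [CE]
    rw [exp_yobs' P D A hD hA 𝒜 Ypot hInt hIndep d hd, Finset.sum_div]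
    exact Finset.sum_congr rfl (fun a ha => by rw [mul_div_assoc]; rfl)
  have hsum : ∀ d ∈ ({0,1} : Finset ℕ), ∑ a ∈ 𝒜, piP P D A d a = 1 := by
    intro d hd
    simp only [piP]
    rw [← Finset.sum_div, ← pr_evD_eq_sum' P D A hD hA 𝒜 hAsupp d,
      div_self (ne_of_gt (hPrD d hd))]
  refine ⟨?_, ?_, ?_, ?_⟩
  · exact Finset.sum_eq_zero (fun a ha => by
      rw [hCE 0 h0 1 h1 a ha a ha, hCE 0 h0 0 h0 a ha a ha, sub_self, mul_zero])
  · exact Finset.sum_congr rfl (fun a ha => by rw [hdiffCE a ha])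
  · exact Finset.sum_congr rfl (fun a ha => by
      rw [hCE 0 h0 0 h0 a ha a ha, hCE 0 h0 0 h0 0 h𝒜0 0 h𝒜0])
  · rw [hCEY 1 h1, hCEY 0 h0]
    have key : (∑ a ∈ 𝒜, piP P D A 1 a * (muP P Ypot 1 a - muP P Ypot 0 a))
        + ∑ a ∈ 𝒜, (piP P D A 1 a - piP P D A 0 a) * (muP P Ypot 0 a - muP P Ypot 0 0)
        = (∑ a ∈ 𝒜, muP P Ypot 1 a * piP P D A 1 a)
          - (∑ a ∈ 𝒜, muP P Ypot 0 a * piP P D A 0 a)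
          - ((∑ a ∈ 𝒜, piP P D A 1 a) - ∑ a ∈ 𝒜, piP P D A 0 a) * muP P Ypot 0 0 := by
      rw [← Finset.sum_add_distrib]
      rw [show (∑ a ∈ 𝒜, muP P Ypot 1 a * piP P D A 1 a)
          - (∑ a ∈ 𝒜, muP P Ypot 0 a * piP P D A 0 a)
          - ((∑ a ∈ 𝒜, piP P D A 1 a) - ∑ a ∈ 𝒜, piP P D A 0 a) * muP P Ypot 0 0
          = ∑ a ∈ 𝒜, (muP P Ypot 1 a * piP P D A 1 a - muP P Ypot 0 a * piP P D A 0 a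
              - (piP P D A 1 a - piP P D A 0 a) * muP P Ypot 0 0) by
        simp only [sub_mul, Finset.sum_sub_distrib, Finset.sum_mul]]
      exact Finset.sum_congr rfl (fun a _ => by ring)
    rw [key, hsum 1 h1, hsum 0 h0, sub_self, zero_mul, sub_zero]
end
end

section
/- (Long-regression weight identities.) Assume positivity and that the covariance matrix of (D,A) is positive definite. Then the long-regression weights satisfy Σ_{a∈𝒜} ω_dce^l(a) = 1, Σ_{a∈𝒜} ω_ind^l(a) = 0, and Σ_{a∈𝒜} a_u·ω_ind^l(a) = 0 for every coordinate u = 1,…,K. -/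
open MeasureTheory ProbabilityTheory BigOperators

noncomputable section

variable {Ω : Type} [MeasurableSpace Ω] {K : ℕ}

section AuxLemmas

variable {Ω : Type} [MeasurableSpace Ω] {K : ℕ}

lemma Cov_comm (P : Measure Ω) (Z W : Ω → ℝ) : Cov P Z W = Cov P W Z := by
  unfold Cov
  have h : (fun ω => Z ω * W ω) = fun ω => W ω * Z ω := funext fun ω => mul_comm _ _
  rw [h]; ring

lemma measurableSet_evDA {D : Ω → ℕ} {A : Ω → Fin K → ℕ} (hD : Measurable D)
    (hA : Measurable A) (d : ℕ) (a : Fin K → ℕ) : MeasurableSet (evDA D A d a) := by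
  have h : evDA D A d a = D ⁻¹' {d} ∩ A ⁻¹' {a} := by
    ext ω; simp [evDA, Set.mem_setOf_eq]
  rw [h]
  exact (hD (measurableSet_singleton d)).inter (hA (measurableSet_singleton a))

lemma exp_eq_sum' (P : Measure Ω) [IsProbabilityMeasure P] (D : Ω → ℕ) (A : Ω → Fin K → ℕ)
    (𝒜 : Finset (Fin K → ℕ)) (hD : Measurable D) (hA : Measurable A)
    (hDbin : ∀ ω, D ω = 0 ∨ D ω = 1) (hAsupp : ∀ ω, A ω ∈ 𝒜)
    (g : Ω → ℝ) (f : ℕ → (Fin K → ℕ) → ℝ) (hgf : ∀ ω, g ω = f (D ω) (A ω)) :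
    Exp P g = ∑ a ∈ 𝒜, (f 0 a * Pr P (evDA D A 0 a) + f 1 a * Pr P (evDA D A 1 a)) := by
  classical
  have hfun : g = fun ω => ∑ d ∈ ({0,1} : Finset ℕ), ∑ a ∈ 𝒜,
      (evDA D A d a).indicator (fun _ => f d a) ω := by
    funext ω
    rw [hgf ω]
    rw [Finset.sum_eq_single (D ω)]
    · rw [Finset.sum_eq_single (A ω)]
      · rw [Set.indicator_of_mem (show ω ∈ evDA D A (D ω) (A ω) from ⟨rfl, rfl⟩)]
      · intro b _ hb
        exact Set.indicator_of_notMem (fun h => hb h.2.symm) _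
      · intro h; exact absurd (hAsupp ω) h
    · intro d' _ hd'
      refine Finset.sum_eq_zero fun a _ => ?_
      exact Set.indicator_of_notMem (fun h => hd' h.1.symm) _
    · intro h
      rcases hDbin ω with h0 | h0 <;> rw [h0] at h <;> simp at h
  have hint : ∀ (d : ℕ) (a : Fin K → ℕ),
      Integrable ((evDA D A d a).indicator (fun _ => f d a)) P :=
    fun d a => (integrable_const _).indicator (measurableSet_evDA hD hA d a)
  rw [Exp, hfun, integral_finset_sum _ (fun d _ =>
    integrable_finset_sum _ fun a _ => hint d a)]
  have hval : ∀ (d : ℕ), (∫ ω, ∑ a ∈ 𝒜, (evDA D A d a).indicator (fun _ => f d a) ω ∂P)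
      = ∑ a ∈ 𝒜, f d a * Pr P (evDA D A d a) := by
    intro d
    rw [integral_finset_sum _ fun a _ => hint d a]
    refine Finset.sum_congr rfl fun a _ => ?_
    rw [integral_indicator_const _ (measurableSet_evDA hD hA d a)]
    simp [Pr, mul_comm, Measure.real]
  rw [Finset.sum_pair (by norm_num : (0:ℕ) ≠ 1), hval 0, hval 1,
    ← Finset.sum_add_distrib]

end AuxLemmas

/-- Long-regression weight identities: Σ ω_dce^l(a) = 1, Σ ω_ind^l(a) = 0, and
Σ a_u·ω_ind^l(a) = 0 for every coordinate u. -/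
theorem long_regression_weight_identities
    (P : Measure Ω) [IsProbabilityMeasure P]
    (D : Ω → ℕ) (A : Ω → Fin K → ℕ) (𝒜 : Finset (Fin K → ℕ))
    (hD : Measurable D) (hA : Measurable A)
    (hDbin : ∀ ω, D ω = 0 ∨ D ω = 1)
    (hAsupp : ∀ ω, A ω ∈ 𝒜) (h𝒜0 : (0 : Fin K → ℕ) ∈ 𝒜)
    (hpos : ∀ d ∈ ({0, 1} : Finset ℕ), ∀ a ∈ 𝒜, 0 < Pr P (evDA D A d a))
    (hPD : (covDAmat P D A).PosDef)
    :
    (∑ a ∈ 𝒜, wdceL P D A a) = 1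
    ∧ (∑ a ∈ 𝒜, windL P D A a) = 0
    ∧ ∀ u : Fin K, (∑ a ∈ 𝒜, (a u : ℝ) * windL P D A a) = 0 := by
  classical
  set q : ℕ → (Fin K → ℕ) → ℝ := fun d a => Pr P (evDA D A d a) with hqdef
  have hfold : ∀ d a, Pr P (evDA D A d a) = q d a := fun _ _ => rfl
  have hsum : ∀ (g : Ω → ℝ) (f : ℕ → (Fin K → ℕ) → ℝ), (∀ ω, g ω = f (D ω) (A ω)) →
      Exp P g = ∑ a ∈ 𝒜, (f 0 a * q 0 a + f 1 a * q 1 a) := by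
    intro g f hgf
    rw [exp_eq_sum' P D A 𝒜 hD hA hDbin hAsupp g f hgf]
  have hqnn : ∀ d a, 0 ≤ q d a := fun d a => ENNReal.toReal_nonneg
  set p1 : ℝ := ∑ a ∈ 𝒜, q 1 a with hp1def
  set p0 : ℝ := ∑ a ∈ 𝒜, q 0 a with hp0def
  have hone : p0 + p1 = 1 := by
    have h : (1:ℝ) = ∑ a ∈ 𝒜, ((1:ℝ) * q 0 a + 1 * q 1 a) := by
      have := hsum (fun _ => (1:ℝ)) (fun _ _ => (1:ℝ)) (fun ω => rfl)
      rw [← this, Exp]; simp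
    simp only [one_mul] at h
    rw [Finset.sum_add_distrib] at h
    exact h.symm
  have hp1pos : 0 < p1 :=
    lt_of_lt_of_le (hpos 1 (by simp) 0 h𝒜0)
      (Finset.single_le_sum (fun a _ => hqnn 1 a) h𝒜0)
  have hp0pos : 0 < p0 :=
    lt_of_lt_of_le (hpos 0 (by simp) 0 h𝒜0)
      (Finset.single_le_sum (fun a _ => hqnn 0 a) h𝒜0)
  -- Pr of evD
  have hIndD : ∀ d : ℕ, Pr P (evD D d) = Exp P (fun ω => if D ω = d then (1:ℝ) else 0) := by
    intro d
    have h : (fun ω => if D ω = d then (1:ℝ) else 0) = (evD D d).indicator fun _ => (1:ℝ) := by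
      funext ω; simp [Set.indicator, evD, Set.mem_setOf_eq]; congr
    rw [Exp, h, integral_indicator_const _ (show MeasurableSet (evD D d) from hD (measurableSet_singleton d))]
    simp [Pr, Measure.real]
  have hPrD1 : Pr P (evD D 1) = p1 := by
    rw [hIndD 1, hsum _ (fun d _ => if d = 1 then (1:ℝ) else 0) (fun ω => rfl)]
    simp [hp1def]
  have hPrD0 : Pr P (evD D 0) = p0 := by
    rw [hIndD 0, hsum _ (fun d _ => if d = 0 then (1:ℝ) else 0) (fun ω => rfl)]
    simp [hp0def]
  have hPrA : ∀ a ∈ 𝒜, Pr P (evA A a) = q 0 a + q 1 a := by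
    intro a ha
    have h : (fun ω => if A ω = a then (1:ℝ) else 0) = (evA A a).indicator fun _ => (1:ℝ) := by
      funext ω; simp [Set.indicator, evA, Set.mem_setOf_eq]; congr
    have h2 : Pr P (evA A a) = Exp P (fun ω => if A ω = a then (1:ℝ) else 0) := by
      rw [Exp, h, integral_indicator_const _ (show MeasurableSet (evA A a) from hA (measurableSet_singleton a))]
      simp [Pr, Measure.real]
    rw [h2, hsum _ (fun _ a' => if a' = a then (1:ℝ) else 0) (fun ω => rfl)]
    rw [Finset.sum_add_distrib]
    simp [Finset.sum_ite_eq', ha]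
  have hED : Exp P (fun ω => (D ω : ℝ)) = p1 := by
    rw [hsum _ (fun d _ => (d:ℝ)) (fun ω => rfl)]
    simp [hp1def]
  have hE : ∀ j, Exp P (fun ω => (A ω j : ℝ))
      = ∑ a ∈ 𝒜, ((a j : ℝ) * q 0 a + (a j : ℝ) * q 1 a) := by
    intro j
    rw [hsum _ (fun _ a => (a j : ℝ)) (fun ω => rfl)]
  have hVarD : varD P D = p1 * p0 := by
    rw [varD, Cov, hED, hsum _ (fun d _ => (d:ℝ) * (d:ℝ)) (fun ω => rfl)]
    have h : ∑ a ∈ 𝒜, (((0:ℕ):ℝ) * ((0:ℕ):ℝ) * q 0 a + ((1:ℕ):ℝ) * ((1:ℕ):ℝ) * q 1 a) = p1 := by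
      simp [hp1def]
    rw [h]
    have hp0 : p0 = 1 - p1 := by linarith
    rw [hp0]; ring
  have hcovDA : ∀ j, covDA P D A j
      = (∑ a ∈ 𝒜, (a j : ℝ) * q 1 a) - p1 * Exp P (fun ω => (A ω j : ℝ)) := by
    intro j
    rw [covDA, Cov, hED, hsum _ (fun d a => (d:ℝ) * (a j : ℝ)) (fun ω => rfl)]
    simp
  have hvarA : ∀ i j, varAmat P A i j
      = (∑ a ∈ 𝒜, ((a i : ℝ) * (a j : ℝ) * q 0 a + (a i : ℝ) * (a j : ℝ) * q 1 a))
        - Exp P (fun ω => (A ω i : ℝ)) * Exp P (fun ω => (A ω j : ℝ)) := by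
    intro i j
    rw [show varAmat P A i j
        = Cov P (fun ω => (A ω i : ℝ)) (fun ω => (A ω j : ℝ)) from rfl, Cov,
      hsum _ (fun _ a => (a i : ℝ) * (a j : ℝ)) (fun ω => rfl)]
  have hVAsymm : ∀ i j, varAmat P A i j = varAmat P A j i := fun i j => Cov_comm P _ _
  -- positive definiteness of Var(A)
  have hVApos : (varAmat P A).PosDef := by
    refine Matrix.PosDef.of_dotProduct_mulVec_pos ?_ ?_
    · exact Matrix.ext fun i j => by
        rw [Matrix.conjTranspose_apply, star_trivial]; exact hVAsymm j i
    · intro x hx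
      have hy : (Sum.elim (fun _ : Unit => (0:ℝ)) x) ≠ 0 := by
        intro h
        exact hx (funext fun j => congrFun h (Sum.inr j))
      have h := hPD.dotProduct_mulVec_pos hy
      have hcomp : dotProduct (star (Sum.elim (fun _ : Unit => (0:ℝ)) x))
          (Matrix.mulVec (covDAmat P D A) (Sum.elim (fun _ : Unit => (0:ℝ)) x))
          = dotProduct (star x) (Matrix.mulVec (varAmat P A) x) := by
        simp only [star_trivial, dotProduct, Matrix.mulVec, Fintype.sum_sum_type,
          Sum.elim_inl, Sum.elim_inr, mul_zero, zero_mul, Finset.sum_const_zero,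
          zero_add, add_zero, Finset.univ_unique, Finset.sum_singleton]
        rfl
      rwa [hcomp] at h
  have hdetVA : IsUnit (varAmat P A).det := isUnit_iff_ne_zero.mpr hVApos.det_pos.ne'
  have hinvmul : (varAmat P A)⁻¹ * varAmat P A = 1 := Matrix.nonsing_inv_mul _ hdetVA
  have hMV : ∀ u, (∑ j, Mlong P D A j * varAmat P A j u) = covDA P D A u := by
    intro u
    have hrow : ∀ i, (∑ j, (varAmat P A)⁻¹ i j * varAmat P A j u)
        = if i = u then (1:ℝ) else 0 := by
      intro i
      rw [← Matrix.mul_apply, hinvmul, Matrix.one_apply]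
    calc ∑ j, Mlong P D A j * varAmat P A j u
        = ∑ j, ∑ i, covDA P D A i * ((varAmat P A)⁻¹ i j * varAmat P A j u) := by
          refine Finset.sum_congr rfl fun j _ => ?_
          rw [Mlong, Finset.sum_mul]
          exact Finset.sum_congr rfl fun i _ => by ring
      _ = ∑ i, covDA P D A i * ∑ j, (varAmat P A)⁻¹ i j * varAmat P A j u := by
          rw [Finset.sum_comm]
          exact Finset.sum_congr rfl fun i _ => by rw [Finset.mul_sum]
      _ = covDA P D A u := by
          simp [hrow]
  -- denominator is positive
  have hdenompos : 0 < denomL P D A := by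
    set x : Unit ⊕ Fin K → ℝ := Sum.elim (fun _ => (1:ℝ)) (fun j => -(Mlong P D A j))
      with hxdef
    have hx : x ≠ 0 := by
      intro h
      have := congrFun h (Sum.inl ())
      simp [hxdef] at this
    have h := hPD.dotProduct_mulVec_pos hx
    have hrow : ∀ i, (covDA P D A i * 1 + ∑ j, varAmat P A i j * (-(Mlong P D A j))) = 0 := by
      intro i
      have h2 : ∑ j, varAmat P A i j * (-(Mlong P D A j))
          = -∑ j, Mlong P D A j * varAmat P A j i := by
        rw [← Finset.sum_neg_distrib]
        exact Finset.sum_congr rfl fun j _ => by rw [hVAsymm i j]; ring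
      rw [h2, hMV i]; ring
    have hcomp : dotProduct (star x) (Matrix.mulVec (covDAmat P D A) x) = denomL P D A := by
      have e3 : ∀ i : Fin K, covDAmat P D A (Sum.inr i) (Sum.inl ()) = covDA P D A i :=
        fun i => Cov_comm P _ _
      simp only [star_trivial, dotProduct, Matrix.mulVec, Fintype.sum_sum_type,
        Finset.univ_unique, Finset.sum_singleton, hxdef, Sum.elim_inl, Sum.elim_inr]
      have hentry1 : covDAmat P D A (Sum.inl ()) (Sum.inl ()) = varD P D := rfl
      have hentry2 : ∀ j, covDAmat P D A (Sum.inl ()) (Sum.inr j) = covDA P D A j :=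
        fun j => rfl
      have hentry4 : ∀ i j, covDAmat P D A (Sum.inr i) (Sum.inr j) = varAmat P A i j :=
        fun i j => rfl
      simp only [hentry1, hentry2, e3, hentry4]
      have hz : ∀ i : Fin K, (-(Mlong P D A i)) *
          (covDA P D A i * 1 + ∑ j, varAmat P A i j * (-(Mlong P D A j))) = 0 :=
        fun i => by rw [hrow i]; ring
      rw [Finset.sum_congr rfl fun i _ => hz i]
      simp [denomL, mul_comm]
      ring
    rwa [hcomp] at h
  have hdenomne : denomL P D A ≠ 0 := ne_of_gt hdenompos
  -- key summation identities
  have key1 : ∀ j, ∑ a ∈ 𝒜, q 1 a * ((a j : ℝ) - Exp P (fun ω => (A ω j : ℝ)))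
      = covDA P D A j := by
    intro j
    rw [hcovDA j, hp1def, Finset.sum_mul, ← Finset.sum_sub_distrib]
    exact Finset.sum_congr rfl fun a _ => by ring
  have key2 : ∀ j, ∑ a ∈ 𝒜, (q 0 a + q 1 a) * ((a j : ℝ) - Exp P (fun ω => (A ω j : ℝ)))
      = 0 := by
    intro j
    have h1 : ∑ a ∈ 𝒜, (q 0 a + q 1 a) * ((a j : ℝ) - Exp P (fun ω => (A ω j : ℝ)))
        = (∑ a ∈ 𝒜, ((a j : ℝ) * q 0 a + (a j : ℝ) * q 1 a))
          - (∑ a ∈ 𝒜, (q 0 a + q 1 a)) * Exp P (fun ω => (A ω j : ℝ)) := by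
      rw [Finset.sum_mul, ← Finset.sum_sub_distrib]
      exact Finset.sum_congr rfl fun a _ => by ring
    rw [h1, ← hE j, Finset.sum_add_distrib, ← hp0def, ← hp1def, hone, one_mul, sub_self]
  have key3 : ∀ u j, ∑ a ∈ 𝒜, (q 0 a + q 1 a) * (a u : ℝ) * ((a j : ℝ)
      - Exp P (fun ω => (A ω j : ℝ))) = varAmat P A u j := by
    intro u j
    rw [hvarA u j, hE u, Finset.sum_mul, ← Finset.sum_sub_distrib]
    exact Finset.sum_congr rfl fun a _ => by ring
  have key4 : ∀ u, varD P D * ((∑ a ∈ 𝒜, (a u : ℝ) * q 1 a) / p1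
      - (∑ a ∈ 𝒜, (a u : ℝ) * q 0 a) / p0) = covDA P D A u := by
    intro u
    rw [hVarD, hcovDA u, hE u]
    have hp0' : p0 = 1 - p1 := by linarith
    have h1p : (1:ℝ) - p1 ≠ 0 := by rw [← hp0']; exact ne_of_gt hp0pos
    rw [Finset.sum_add_distrib]
    rw [hp0']
    field_simp [h1p]
    ring
  -- swap lemma
  have hswap : ∀ (c : (Fin K → ℕ) → ℝ),
      ∑ a ∈ 𝒜, c a * (∑ j, Mlong P D A j * ((a j : ℝ) - Exp P (fun ω => (A ω j : ℝ))))
      = ∑ j, Mlong P D A j * (∑ a ∈ 𝒜, c a * ((a j : ℝ)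
          - Exp P (fun ω => (A ω j : ℝ)))) := by
    intro c
    simp_rw [Finset.mul_sum]
    rw [Finset.sum_comm]
    refine Finset.sum_congr rfl fun j _ => ?_
    exact Finset.sum_congr rfl fun a _ => by ring
  have hpi1 : ∀ a, piP P D A 1 a = q 1 a / p1 := by
    intro a; rw [piP, hPrD1, hfold]
  have hpi0 : ∀ a, piP P D A 0 a = q 0 a / p0 := by
    intro a; rw [piP, hPrD0, hfold]
  refine ⟨?_, ?_, ?_⟩
  · -- DCE weights sum to one
    simp only [wdceL]
    rw [← Finset.sum_div, div_eq_one_iff_eq hdenomne]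
    have hterm : ∀ a ∈ 𝒜, piP P D A 1 a * (varD P D - Pr P (evD D 1) *
        ∑ j, Mlong P D A j * ((a j : ℝ) - Exp P (fun ω => (A ω j : ℝ))))
        = varD P D * (q 1 a / p1) - q 1 a *
          ∑ j, Mlong P D A j * ((a j : ℝ) - Exp P (fun ω => (A ω j : ℝ))) := by
      intro a _
      rw [hpi1 a, hPrD1]
      field_simp
    rw [Finset.sum_congr rfl hterm, Finset.sum_sub_distrib]
    rw [hswap (fun a => q 1 a)]
    simp only [key1]
    rw [← Finset.mul_sum, ← Finset.sum_div, ← hp1def,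
      div_self (ne_of_gt hp1pos), mul_one, denomL]
  · -- ind weights sum to zero
    simp only [windL]
    rw [← Finset.sum_div, div_eq_zero_iff]
    left
    have hterm : ∀ a ∈ 𝒜, (varD P D * (piP P D A 1 a - piP P D A 0 a) -
        Pr P (evA A a) * ∑ j, Mlong P D A j * ((a j : ℝ) - Exp P (fun ω => (A ω j : ℝ))))
        = varD P D * (q 1 a / p1) - varD P D * (q 0 a / p0) - (q 0 a + q 1 a) *
          ∑ j, Mlong P D A j * ((a j : ℝ) - Exp P (fun ω => (A ω j : ℝ))) := by
      intro a ha
      rw [hpi1 a, hpi0 a, hPrA a ha]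
      ring
    rw [Finset.sum_congr rfl hterm]
    simp only [Finset.sum_sub_distrib]
    rw [hswap (fun a => q 0 a + q 1 a)]
    simp only [key2, mul_zero, Finset.sum_const_zero, sub_zero]
    rw [← Finset.mul_sum, ← Finset.mul_sum, ← Finset.sum_div, ← Finset.sum_div,
      ← hp1def, ← hp0def, div_self (ne_of_gt hp1pos), div_self (ne_of_gt hp0pos), sub_self]
  · -- a_u-weighted ind weights sum to zero
    intro u
    simp only [windL]
    simp only [← mul_div_assoc]
    rw [← Finset.sum_div, div_eq_zero_iff]
    left
    have hterm : ∀ a ∈ 𝒜, (a u : ℝ) * (varD P D * (piP P D A 1 a - piP P D A 0 a) -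
        Pr P (evA A a) * ∑ j, Mlong P D A j * ((a j : ℝ) - Exp P (fun ω => (A ω j : ℝ))))
        = varD P D * (((a u : ℝ) * q 1 a) / p1) - varD P D * (((a u : ℝ) * q 0 a) / p0)
          - ((q 0 a + q 1 a) * (a u : ℝ)) *
          ∑ j, Mlong P D A j * ((a j : ℝ) - Exp P (fun ω => (A ω j : ℝ))) := by
      intro a ha
      rw [hpi1 a, hpi0 a, hPrA a ha]
      field_simp
    rw [Finset.sum_congr rfl hterm]
    simp only [Finset.sum_sub_distrib]
    rw [hswap (fun a => (q 0 a + q 1 a) * (a u : ℝ))]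
    have hk3 : ∀ j, ∑ a ∈ 𝒜, ((q 0 a + q 1 a) * (a u : ℝ)) * ((a j : ℝ)
        - Exp P (fun ω => (A ω j : ℝ))) = varAmat P A u j := fun j => key3 u j
    simp only [hk3]
    have hMVu : ∑ j, Mlong P D A j * varAmat P A u j = covDA P D A u := by
      rw [← hMV u]
      exact Finset.sum_congr rfl fun j _ => by rw [hVAsymm u j]
    rw [hMVu]
    rw [← Finset.mul_sum, ← Finset.mul_sum, ← Finset.sum_div, ← Finset.sum_div, ← key4 u]
    ring
end
end
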